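/- Let M be an O_C[[X]]-module admitting a short exact sequence 0 → F₁ → F₂ → M → 0 of O_C[[X]]-modules with F₁ and F₂ finite free, and suppose that X·M = 0. Then M, regarded as an O_C-module by restriction of scalars along the constant-coefficient inclusion O_C → O_C[[X]], is a free O_C-module. -/

import Mathlib

/-!
STATEMENT 7: Let `M` be an `O_C[[X]]`-module admitting a short exact sequence
`0 → F₁ → F₂ → M → 0` with `F₁, F₂` finite free, and suppose `X • M = 0`.  Then `M`, regarded
as an `O_C`-module by restriction of scalars along the constant-coefficient inclusion
`O_C → O_C[[X]]`, is a free `O_C`-module.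
-/

noncomputable section

/-- The valuation ring `O_C = {x : C | ‖x‖ ≤ 1}` of a nonarchimedean normed field. -/
def OC (C : Type) [NormedField C] (hna : IsNonarchimedean (norm : C → ℝ)) : Subring C where
  carrier := {x : C | ‖x‖ ≤ 1}
  mul_mem' := fun {a b} (ha : ‖a‖ ≤ 1) (hb : ‖b‖ ≤ 1) => by
    have : ‖a * b‖ = ‖a‖ * ‖b‖ := norm_mul a b
    simp only [Set.mem_setOf_eq, this]
    nlinarith [norm_nonneg a, norm_nonneg b]
  one_mem' := by simp
  add_mem' := fun {a b} (ha : ‖a‖ ≤ 1) (hb : ‖b‖ ≤ 1) =>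
    le_trans (hna a b) (max_le ha hb)
  zero_mem' := by simp
  neg_mem' := fun {a} (ha : ‖a‖ ≤ 1) => by simpa using ha

section Aux

open TensorProduct LinearMap


/-- A torsion-free module over a Bezout domain is flat. -/
theorem aux_flat (R N : Type*) [CommRing R] [IsDomain R] [IsBezout R]
    [AddCommGroup N] [Module R N] [NoZeroSMulDivisors R N] : Module.Flat R N := by
  rw [Module.Flat.iff_rTensor_injective]
  intro I hI
  obtain ⟨a, ha⟩ := (IsBezout.isPrincipal_of_FG I hI).1
  subst ha
  rcases eq_or_ne a 0 with rfl | ha0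
  · have hz : ∀ x : (Ideal.span {(0:R)} : Ideal R) ⊗[R] N, x = 0 := by
      intro x
      induction x using TensorProduct.induction_on with
      | zero => rfl
      | tmul r n =>
        have : (r : R) = 0 := zero_dvd_iff.mp (Ideal.mem_span_singleton.mp r.2)
        rw [show r = 0 from Subtype.ext this, zero_tmul]
      | add x y hx hy => rw [hx, hy, add_zero]
    intro x y _
    rw [hz x, hz y]
  · have hinj : Function.Injective (LinearMap.toSpanSingleton R R a) := by
      intro x y h
      simp only [LinearMap.toSpanSingleton_apply, smul_eq_mul] at h
      exact mul_left_cancel₀ ha0 (by rw [mul_comm x a, mul_comm y a] at h; exact h)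
    let e : R ≃ₗ[R] (Ideal.span {a} : Ideal R) :=
      (LinearEquiv.ofInjective _ hinj).trans
        (LinearEquiv.ofEq _ _ (LinearMap.span_singleton_eq_range R R a).symm)
    have hcomp : (Ideal.span {a}).subtype ∘ₗ e.toLinearMap =
        a • (LinearMap.id : R →ₗ[R] R) := by
      refine LinearMap.ext fun x => ?_
      simp only [LinearMap.comp_apply, Submodule.subtype_apply, LinearMap.smul_apply,
        LinearMap.id_apply, smul_eq_mul]
      show (LinearMap.toSpanSingleton R R a) x = a * x
      rw [LinearMap.toSpanSingleton_apply, smul_eq_mul, mul_comm]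
    have key : Function.Injective
        ((rTensor N (Ideal.span {a}).subtype) ∘ₗ rTensor N (e : R →ₗ[R] _)) := by
      rw [← rTensor_comp, hcomp, rTensor_smul, rTensor_id]
      intro x y h
      simp only [LinearMap.smul_apply, LinearMap.id_apply] at h
      have h2 : a • (x - y) = 0 := by rw [smul_sub, h, sub_self]
      have h3 : a • (TensorProduct.lid R N) (x - y) = 0 := by
        rw [← map_smul, h2, map_zero]
      have h4 := (smul_eq_zero.mp h3).resolve_left ha0
      have h5 : x - y = 0 := (TensorProduct.lid R N).injective (by rw [h4, map_zero])
      exact sub_eq_zero.mp h5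
    have hsurj : Function.Surjective (rTensor N e.toLinearMap) := by
      intro z
      obtain ⟨w, hw⟩ := (LinearEquiv.rTensor N e).surjective z
      exact ⟨w, by rw [← hw]; rfl⟩
    intro x y h
    obtain ⟨x', rfl⟩ := hsurj x
    obtain ⟨y', rfl⟩ := hsurj y
    exact congrArg _ (key (by simpa using h))

/-- The valuation-ring property of `OC`. -/
theorem OC.valuationRing (C : Type) [NormedField C]
    (hna : IsNonarchimedean (norm : C → ℝ)) :  ValuationRing (OC C hna) := by
  have hpre : PreValuationRing (OC C hna) := by
    constructor
    intro a b
    rcases le_total ‖(a : C)‖ ‖(b : C)‖ with h | h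
    · rcases eq_or_ne (b : C) 0 with hb | hb
      · have ha : (a : C) = 0 := norm_le_zero_iff.mp (by simpa [hb] using h)
        exact ⟨0, Or.inl (Subtype.ext (by simp [ha, hb]))⟩
      · refine ⟨⟨(a : C) / (b : C), ?_⟩, Or.inr (Subtype.ext ?_)⟩
        · show ‖(a : C) / (b : C)‖ ≤ 1
          rw [norm_div, div_le_one (norm_pos_iff.mpr hb)]
          exact h
        · show (b : C) * ((a : C) / (b : C)) = a
          field_simp
    · rcases eq_or_ne (a : C) 0 with ha | ha
      · have hb : (b : C) = 0 := norm_le_zero_iff.mp (by simpa [ha] using h)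
        exact ⟨0, Or.inr (Subtype.ext (by simp [ha, hb]))⟩
      · refine ⟨⟨(b : C) / (a : C), ?_⟩, Or.inl (Subtype.ext ?_)⟩
        · show ‖(b : C) / (a : C)‖ ≤ 1
          rw [norm_div, div_le_one (norm_pos_iff.mpr ha)]
          exact h
        · show (a : C) * ((b : C) / (a : C)) = b
          field_simp
  exact ⟨⟩

theorem aux_main (A : Type) [CommRing A] [IsDomain A]
    (M : Type) [AddCommGroup M] [Module (PowerSeries A) M]
    (n₁ n₂ : ℕ)
    (f : (Fin n₁ → PowerSeries A) →ₗ[PowerSeries A] (Fin n₂ → PowerSeries A))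
    (g : (Fin n₂ → PowerSeries A) →ₗ[PowerSeries A] M)
    (hf : Function.Injective f) (hg : Function.Surjective g)
    (hfg : LinearMap.ker g = LinearMap.range f)
    (hXM : ∀ m : M, (PowerSeries.X : PowerSeries A) • m = 0) :
    Module.FinitePresentation A (RestrictScalars A (PowerSeries A) M) ∧
      NoZeroSMulDivisors A (RestrictScalars A (PowerSeries A) M) := by
  classical
  set R := PowerSeries A with hR
  let e := RestrictScalars.addEquiv A R M
  -- splitting of a vector of power series into constant part and X-divisible part
  have hsplit : ∀ {n : ℕ} (v : Fin n → R), ∃ u : Fin n → R,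
      v = (fun i => PowerSeries.C (R := A) (PowerSeries.constantCoeff (R := A) (v i))) + (PowerSeries.X : R) • u := by
    intro n v
    have hdvd : ∀ i, ∃ u, v i - PowerSeries.C (R := A) (PowerSeries.constantCoeff (R := A) (v i)) =
        (PowerSeries.X : R) * u := by
      intro i
      have hd : (PowerSeries.X : R) ∣
          (v i - PowerSeries.C (R := A) (PowerSeries.constantCoeff (R := A) (v i))) :=
        PowerSeries.X_dvd_iff.mpr (by simp)
      obtain ⟨u, hu⟩ := hd
      exact ⟨u, hu⟩
    choose u hu using hdvd
    refine ⟨u, funext fun i => ?_⟩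
    have := hu i
    rw [Pi.add_apply, Pi.smul_apply, smul_eq_mul, ← this]
    ring
  -- the surjection q : A^{n₂} → N
  let q : (Fin n₂ → A) →ₗ[A] (RestrictScalars A R M) :=
    { toFun := fun v => e.symm (g (fun i => PowerSeries.C (R := A) (v i)))
      map_add' := fun v w => by
        show e.symm (g fun i => PowerSeries.C (R := A) ((v + w) i)) =
          e.symm (g fun i => PowerSeries.C (R := A) (v i)) + e.symm (g fun i => PowerSeries.C (R := A) (w i))
        have h1 : (fun i => PowerSeries.C (R := A) ((v + w) i)) =
            (fun i => PowerSeries.C (R := A) (v i)) + (fun i => PowerSeries.C (R := A) (w i)) :=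
          funext fun i => by simp
        rw [h1, map_add g, map_add e.symm]
      map_smul' := fun c v => by
        have h1 : (fun i => PowerSeries.C (R := A) ((c • v) i)) =
            PowerSeries.C (R := A) c • (fun i => PowerSeries.C (R := A) (v i)) := by
          funext i
          simp [Pi.smul_apply, smul_eq_mul, map_mul]
        show e.symm (g fun i => PowerSeries.C (R := A) ((c • v) i)) =
          c • e.symm (g fun i => PowerSeries.C (R := A) (v i))
        rw [h1, map_smul g]
        exact RestrictScalars.addEquiv_symm_map_algebraMap_smul A R M c _ }
  have hqsurj : Function.Surjective q := by
    intro n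
    obtain ⟨w, hw⟩ := hg (e n)
    obtain ⟨u, hu⟩ := hsplit w
    refine ⟨fun i => PowerSeries.constantCoeff (R := A) (w i), ?_⟩
    show e.symm (g _) = n
    have : (fun i => PowerSeries.C (R := A) (PowerSeries.constantCoeff (R := A) (w i))) =
        w - (PowerSeries.X : R) • u := eq_sub_iff_add_eq.mpr hu.symm
    rw [this, map_sub, map_smul, hXM, sub_zero, hw, AddEquiv.symm_apply_apply]
  -- the map s : A^{n₁} → A^{n₂} presenting the kernel
  let s : (Fin n₁ → A) →ₗ[A] (Fin n₂ → A) :=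
    { toFun := fun w i => PowerSeries.constantCoeff (R := A) (f (fun j => PowerSeries.C (R := A) (w j)) i)
      map_add' := fun v w => by
        funext i
        have h1 : (fun j => PowerSeries.C (R := A) ((v + w) j)) =
            (fun j => PowerSeries.C (R := A) (v j)) + (fun j => PowerSeries.C (R := A) (w j)) :=
          funext fun j => by simp
        show PowerSeries.constantCoeff (R := A) (f (fun j => PowerSeries.C (R := A) ((v + w) j)) i) = _
        rw [h1, map_add f]
        simp
      map_smul' := fun c w => by
        funext i
        have h1 : (fun j => PowerSeries.C (R := A) ((c • w) j)) =
            PowerSeries.C (R := A) c • (fun j => PowerSeries.C (R := A) (w j)) := by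
          funext j; simp [Pi.smul_apply, smul_eq_mul, map_mul]
        show PowerSeries.constantCoeff (R := A) (f (fun j => PowerSeries.C (R := A) ((c • w) j)) i) = _
        rw [h1, map_smul f]
        simp [Pi.smul_apply, smul_eq_mul] }
  have hker : LinearMap.ker q = LinearMap.range s := by
    apply le_antisymm
    · intro v hv
      have hv' : g (fun i => PowerSeries.C (R := A) (v i)) = 0 := by
        have : e.symm (g (fun i => PowerSeries.C (R := A) (v i))) = 0 := hv
        have := congrArg e this
        simpa using this
      obtain ⟨u, hu⟩ : (fun i => PowerSeries.C (R := A) (v i)) ∈ LinearMap.range f := by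
        rw [← hfg]; exact hv'
      obtain ⟨u', hu'⟩ := hsplit u
      refine ⟨fun j => PowerSeries.constantCoeff (R := A) (u j), ?_⟩
      funext i
      show PowerSeries.constantCoeff (R := A) (f (fun j => PowerSeries.C (R := A)
        (PowerSeries.constantCoeff (R := A) (u j))) i) = v i
      have h2 : f (fun j => PowerSeries.C (R := A) (PowerSeries.constantCoeff (R := A) (u j)))
          = f u - (PowerSeries.X : R) • f u' := by
        rw [← map_smul, ← map_sub]
        congr 1
        have h3 : (fun j => PowerSeries.C (R := A) (PowerSeries.constantCoeff (R := A) (u j))) =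
            u - (PowerSeries.X : R) • u' := eq_sub_iff_add_eq.mpr hu'.symm
        exact h3
      rw [h2, hu]
      simp [Pi.sub_apply, Pi.smul_apply, smul_eq_mul]
    · rintro _ ⟨w, rfl⟩
      obtain ⟨u', hu'⟩ := hsplit (f (fun j => PowerSeries.C (R := A) (w j)))
      have h2 : (fun i => PowerSeries.C (R := A) (PowerSeries.constantCoeff (R := A)
          (f (fun j => PowerSeries.C (R := A) (w j)) i)))
          = f (fun j => PowerSeries.C (R := A) (w j)) - (PowerSeries.X : R) • u' :=
        eq_sub_iff_add_eq.mpr hu'.symm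
      have h3 : g (f (fun j => PowerSeries.C (R := A) (w j))) = 0 := by
        have : f (fun j => PowerSeries.C (R := A) (w j)) ∈ LinearMap.ker g := by
          rw [hfg]; exact ⟨_, rfl⟩
        exact this
      show e.symm (g fun i => PowerSeries.C (R := A) (PowerSeries.constantCoeff (R := A)
        (f (fun j => PowerSeries.C (R := A) (w j)) i))) = 0
      rw [h2, map_sub, map_smul, h3, hXM, sub_zero, map_zero]
  letI : @Module A (RestrictScalars A (PowerSeries A) M) _ AddCommGroup.toAddCommMonoid :=
    RestrictScalars.module A (PowerSeries A) M
  constructor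
  · refine Module.finitePresentation_of_surjective q hqsurj ?_
    have hfg' : (LinearMap.range s).FG := by
      rw [← Submodule.map_top]
      exact (Module.Finite.fg_top (R := A) (M := Fin n₁ → A)).map s
    exact (congrArg Submodule.FG hker).mpr hfg'
  · refine ⟨fun {c n} hcn => ?_⟩
    by_cases hc : c = 0
    · exact Or.inl hc
    right
    set m := e n with hm
    have hCcm : (PowerSeries.C (R := A) c) • m = 0 := by
      have h := congrArg e hcn
      rw [RestrictScalars.addEquiv_map_smul, map_zero] at h
      exact h
    obtain ⟨y, hy⟩ := hg m
    obtain ⟨z, hz⟩ : PowerSeries.C (R := A) c • y ∈ LinearMap.range f := by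
      rw [← hfg]
      show g _ = 0
      rw [map_smul, hy, hCcm]
    obtain ⟨z₀, hz₀⟩ : (PowerSeries.X : R) • y ∈ LinearMap.range f := by
      rw [← hfg]
      show g _ = 0
      rw [map_smul, hy, hXM]
    have heq : f (PowerSeries.C (R := A) c • z₀) = f ((PowerSeries.X : R) • z) := by
      rw [map_smul, map_smul, hz₀, hz, smul_smul, smul_smul, mul_comm]
    have h2 : PowerSeries.C (R := A) c • z₀ = (PowerSeries.X : R) • z := hf heq
    have h3 : ∀ j, PowerSeries.constantCoeff (R := A) (z₀ j) = 0 := by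
      intro j
      have h4 : PowerSeries.C (R := A) c * z₀ j = (PowerSeries.X : R) * z j := by
        simpa [Pi.smul_apply, smul_eq_mul] using congrFun h2 j
      have h5 := congrArg (PowerSeries.constantCoeff (R := A)) h4
      simp only [map_mul, PowerSeries.constantCoeff_C, PowerSeries.constantCoeff_X,
        zero_mul] at h5
      exact (mul_eq_zero.mp h5).resolve_left hc
    obtain ⟨w, hw⟩ := hsplit z₀
    have hz₀' : z₀ = (PowerSeries.X : R) • w := by
      rw [hw]
      funext i
      simp [h3]
    have h6 : (PowerSeries.X : R) • y = (PowerSeries.X : R) • f w := by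
      rw [← hz₀, hz₀', map_smul]
    have h7 : y = f w := by
      funext i
      have h8 := congrFun h6 i
      simp only [Pi.smul_apply, smul_eq_mul] at h8
      exact mul_left_cancel₀ PowerSeries.X_ne_zero h8
    have h8 : m = 0 := by
      rw [← hy, h7]
      have : f w ∈ LinearMap.ker g := by rw [hfg]; exact ⟨w, rfl⟩
      exact this
    have h9 : n = e.symm 0 := by rw [← h8]; exact (e.symm_apply_apply n).symm
    simpa using h9

end Aux

theorem statement7 (p : ℕ) [Fact p.Prime] (C : Type) [NontriviallyNormedField C]
    [CharP C p] [PerfectRing C p] [CompleteSpace C]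
    (hna : IsNonarchimedean (norm : C → ℝ))
    (M : Type) [AddCommGroup M] [Module (PowerSeries (OC C hna)) M]
    (n₁ n₂ : ℕ)
    (f : (Fin n₁ → PowerSeries (OC C hna)) →ₗ[PowerSeries (OC C hna)]
      (Fin n₂ → PowerSeries (OC C hna)))
    (g : (Fin n₂ → PowerSeries (OC C hna)) →ₗ[PowerSeries (OC C hna)] M)
    (hf : Function.Injective f) (hg : Function.Surjective g)
    (hfg : LinearMap.ker g = LinearMap.range f)
    (hXM : ∀ m : M, (PowerSeries.X : PowerSeries (OC C hna)) • m = 0) :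
    -- `M` is free as an `O_C`-module, via restriction of scalars along the
    -- constant-coefficient inclusion `O_C → O_C[[X]]`
    Module.Free (OC C hna) (RestrictScalars (OC C hna) (PowerSeries (OC C hna)) M) := by
  haveI : ValuationRing (OC C hna) := OC.valuationRing C hna
  obtain ⟨fp, tf⟩ := aux_main (OC C hna) M n₁ n₂ f g hf hg hfg hXM
  haveI := fp
  haveI := tf
  letI hmod : @Module (OC C hna) (RestrictScalars (OC C hna) (PowerSeries (OC C hna)) M) _
      AddCommGroup.toAddCommMonoid :=
    RestrictScalars.module (OC C hna) (PowerSeries (OC C hna)) M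
  haveI : @Module.Finite (OC C hna) (RestrictScalars (OC C hna) (PowerSeries (OC C hna)) M) _
      AddCommGroup.toAddCommMonoid hmod :=
    (inferInstance : Module.Finite (OC C hna) (RestrictScalars (OC C hna) (PowerSeries (OC C hna)) M))
  haveI : @Module.Flat (OC C hna) (RestrictScalars (OC C hna) (PowerSeries (OC C hna)) M) _
      AddCommGroup.toAddCommMonoid hmod :=
    aux_flat _ _
  exact Module.free_of_flat_of_isLocalRing
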